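/- Let R be a Noetherian UFD, and let I be a prime ideal of R generated by two coprime elements f and g. Then the affine modification R[g/f] ≅ R[Y]/(fY − g) is an integral domain, and if moreover f remains prime in R[g/f] and R[g/f][f⁻¹] is a UFD, then R[g/f] is a UFD (Nagata's criterion applied to the affine modification). -/

import Mathlib

set_option maxHeartbeats 1000000
set_option synthInstance.maxHeartbeats 200000

open Polynomial

theorem nagata_crit {A : Type*} [CommRing A] [IsDomain A] [WfDvdMonoid A]
    (p : A) (hp : Prime p) (B : Type*) [CommRing B] [IsDomain B] [Algebra A B]
    [IsLocalization.Away p B] (hB : UniqueFactorizationMonoid B) :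
    UniqueFactorizationMonoid A := by
  have hinj : Function.Injective (algebraMap A B) :=
    IsLocalization.injective B (powers_le_nonZeroDivisors_of_noZeroDivisors hp.ne_zero)
  have hpu : IsUnit (algebraMap A B p) :=
    IsLocalization.map_units B (⟨p, Submonoid.mem_powers p⟩ : Submonoid.powers p)
  have hsurj : ∀ x : B, ∃ (a : A) (n : ℕ), x * algebraMap A B (p ^ n) = algebraMap A B a := by
    intro x
    obtain ⟨⟨a, s⟩, hs⟩ := IsLocalization.surj (Submonoid.powers p) x
    obtain ⟨n, hn⟩ := s.2
    exact ⟨a, n, by rw [show algebraMap A B (p ^ n) = algebraMap A B s from congrArg _ hn]; exact hs⟩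
  -- clearing powers of p in a divisibility
  have key : ∀ (q : A), ¬ p ∣ q → ∀ (n : ℕ) (a c : A), a * p ^ n = q * c → q ∣ a := by
    intro q hpq n
    induction n with
    | zero => intro a c h; exact ⟨c, by simpa using h⟩
    | succ n ih =>
      intro a c h
      have hpc : p ∣ c := by
        rcases hp.dvd_or_dvd (show p ∣ q * c from ⟨a * p ^ n, by rw [← h]; ring⟩) with h' | h'
        · exact absurd h' hpq
        · exact h'
      obtain ⟨c', rfl⟩ := hpc
      refine ih a c' (mul_right_cancel₀ hp.ne_zero ?_)
      rw [mul_assoc, ← pow_succ, h]; ring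
  -- stripping powers of p from a factorization
  have strip : ∀ (q : A) (k : ℕ) (a b : A), q * p ^ k = a * b →
      ∃ (i j : ℕ) (a' b' : A), a = p ^ i * a' ∧ b = p ^ j * b' ∧ q = a' * b' := by
    intro q k
    induction k with
    | zero => intro a b h; exact ⟨0, 0, a, b, by simp, by simp, by simpa using h⟩
    | succ k ih =>
      intro a b h
      have : p ∣ a * b := ⟨q * p ^ k, by rw [← h]; ring⟩
      rcases hp.dvd_or_dvd this with h' | h'
      · obtain ⟨a₂, rfl⟩ := h'
        obtain ⟨i, j, a', b', ha, hb, hq⟩ := ih a₂ b (mul_left_cancel₀ hp.ne_zero (by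
          linear_combination h))
        exact ⟨i + 1, j, a', b', by rw [ha]; ring, hb, hq⟩
      · obtain ⟨b₂, rfl⟩ := h'
        obtain ⟨i, j, a', b', ha, hb, hq⟩ := ih a b₂ (mul_left_cancel₀ hp.ne_zero (by
          linear_combination h))
        exact ⟨i, j + 1, a', b', ha, by rw [hb]; ring, hq⟩
  -- q not divisible by p: q * c = p ^ n implies q is a unit
  have unitlem : ∀ (q : A), ¬ p ∣ q → ∀ (n : ℕ) (c : A), q * c = p ^ n → IsUnit q := by
    intro q hpq n
    induction n with
    | zero => intro c h; exact IsUnit.of_mul_eq_one (a := q) c (by simpa using h)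
    | succ n ih =>
      intro c h
      have hpc : p ∣ c := by
        rcases hp.dvd_or_dvd (show p ∣ q * c from ⟨p ^ n, by rw [h]; ring⟩) with h' | h'
        · exact absurd h' hpq
        · exact h'
      obtain ⟨c', rfl⟩ := hpc
      refine ih c' (mul_right_cancel₀ hp.ne_zero ?_)
      linear_combination h
  refine { irreducible_iff_prime := fun {q} => ⟨fun hq => ?_, Prime.irreducible⟩ }
  by_cases hpq : p ∣ q
  · exact (hp.irreducible.associated_of_dvd hq hpq).prime hp
  -- image of q in B is prime
  have hqB : Prime (algebraMap A B q) := by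
    rw [← UniqueFactorizationMonoid.irreducible_iff_prime]
    constructor
    · intro hu
      obtain ⟨x, hx⟩ := hu.exists_right_inv
      obtain ⟨c, n, hc⟩ := hsurj x
      have : q * c = p ^ n := by
        apply hinj
        rw [map_mul, ← hc, ← mul_assoc, hx, one_mul]
      exact hq.not_isUnit (unitlem q hpq n c this)
    · intro x y hxy
      obtain ⟨a, m, ha⟩ := hsurj x
      obtain ⟨b, n, hb⟩ := hsurj y
      have : q * p ^ (m + n) = a * b := by
        apply hinj
        rw [map_mul, map_mul, ← ha, ← hb, hxy, pow_add, map_mul]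
        ring
      obtain ⟨i, j, a', b', ha', hb', hq'⟩ := strip q (m + n) a b this
      have hpow : ∀ k : ℕ, IsUnit (algebraMap A B (p ^ k)) := fun k => by
        rw [map_pow]; exact hpu.pow k
      rcases hq.isUnit_or_isUnit hq' with h' | h'
      · left
        have : IsUnit (x * algebraMap A B (p ^ m)) := by
          rw [ha, ha', map_mul]
          exact (hpow i).mul (h'.map (algebraMap A B))
        exact isUnit_of_mul_isUnit_left this
      · right
        have : IsUnit (y * algebraMap A B (p ^ n)) := by
          rw [hb, hb', map_mul]
          exact (hpow j).mul (h'.map (algebraMap A B))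
        exact isUnit_of_mul_isUnit_left this
  refine ⟨hq.ne_zero, hq.not_isUnit, fun a b ⟨c, hc⟩ => ?_⟩
  have : algebraMap A B q ∣ algebraMap A B a * algebraMap A B b :=
    ⟨algebraMap A B c, by rw [← map_mul, ← map_mul, hc]⟩
  rcases hqB.dvd_or_dvd this with h' | h'
  · left
    obtain ⟨x, hx⟩ := h'
    obtain ⟨d, n, hd⟩ := hsurj x
    refine key q hpq n a d (hinj ?_)
    rw [map_mul, map_mul, ← hd, hx]; ring
  · right
    obtain ⟨x, hx⟩ := h'
    obtain ⟨d, n, hd⟩ := hsurj x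
    refine key q hpq n b d (hinj ?_)
    rw [map_mul, map_mul, ← hd, hx]; ring



/-- Affine modification along coprime `f, g` generating a prime ideal in a
Noetherian UFD `R`: the subring `R[g/f]` of `Frac R` is isomorphic to
`R[Y]/(fY - g)`, is an integral domain, and if `f` stays prime in `R[g/f]` and the
localization `R[g/f][f⁻¹]` is a UFD, then `R[g/f]` is a UFD (Nagata's criterion). -/
theorem stmt10 {R : Type*} [CommRing R] [IsDomain R] [UniqueFactorizationMonoid R]
    [IsNoetherianRing R] (f g : R) (hf : f ≠ 0) (hcop : IsRelPrime f g)
    (hprime : (Ideal.span {f, g} : Ideal R).IsPrime)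
    (S : Subalgebra R (FractionRing R))
    (hS : S = Algebra.adjoin R
      {algebraMap R (FractionRing R) g / algebraMap R (FractionRing R) f})
    (fS : S) (hfS : (fS : FractionRing R) = algebraMap R (FractionRing R) f)
    -- `Sf` is the localization `R[g/f][f⁻¹]`
    (Sf : Type*) [CommRing Sf] [IsDomain Sf] [Algebra S Sf]
    [IsLocalization.Away fS Sf] :
    Nonempty ((Polynomial R ⧸ Ideal.span
        {Polynomial.C f * Polynomial.X - Polynomial.C g}) ≃ₐ[R] S)
    ∧ IsDomain S
    ∧ (Prime fS → UniqueFactorizationMonoid Sf →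
        UniqueFactorizationMonoid S) := by
    classical
  set K := FractionRing R with hK
  have hinjRK : Function.Injective (algebraMap R K) := IsFractionRing.injective R K
  set f' : K := algebraMap R K f with hf'def
  set g' : K := algebraMap R K g with hg'def
  have hf' : f' ≠ 0 := fun h => hf (hinjRK (by rw [map_zero]; exact h))
  set t₀ : K := g' / f' with ht₀def
  set d : R[X] := C f * X - C g with hd
  -- aeval of d at t₀ vanishes
  have hd0 : Polynomial.aeval t₀ d = 0 := by
    simp only [hd, map_sub, map_mul, aeval_C, aeval_X]
    rw [ht₀def, mul_div_cancel₀ _ hf']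
    simp [hf'def, hg'def]
  -- d is primitive
  have hprim : d.IsPrimitive := by
    intro r hr
    rw [C_dvd_iff_dvd_coeff] at hr
    have h1 := hr 1
    have h0 := hr 0
    simp [hd, coeff_sub, coeff_C_mul, coeff_C, coeff_X] at h1 h0
    exact hcop h1 h0
  -- d is prime in R[X]
  have hdprime : Prime d := by
    rw [← UniqueFactorizationMonoid.irreducible_iff_prime]
    apply hprim.irreducible_of_irreducible_map_of_injective hinjRK
    have hmap : d.map (algebraMap R K) = C f' * (X - C t₀) := by
      simp only [hd, Polynomial.map_sub, Polynomial.map_mul, map_C, map_X, mul_sub, ← map_mul,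
        ht₀def, mul_div_cancel₀ _ hf']
      rfl
    rw [hmap]
    have hu : IsUnit (C f' : K[X]) := Polynomial.isUnit_C.mpr (isUnit_iff_ne_zero.mpr hf')
    exact (associated_unit_mul_right (X - C t₀) (C f') hu).irreducible (irreducible_X_sub_C t₀)
  -- d does not divide C f
  have hdf : ¬ d ∣ C f := by
    intro hdvd
    have hCf : (C f : R[X]) ≠ 0 := fun h => hf (by simpa using h)
    have hle := Polynomial.degree_le_of_dvd hdvd hCf
    have hdeg : d.degree = 1 := by
      rw [hd, sub_eq_add_neg, ← map_neg]
      exact Polynomial.degree_linear hf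
    rw [hdeg, Polynomial.degree_C hf] at hle
    exact absurd hle (by norm_num)
  -- key induction: clearing denominators in the kernel
  have lemA : ∀ n : ℕ, ∀ p : R[X], p.natDegree ≤ n → Polynomial.aeval t₀ p = 0 →
      C f ^ n * p ∈ Ideal.span {d} := by
    intro n
    induction n with
    | zero =>
      intro p hdeg h0
      rw [Polynomial.eq_C_of_natDegree_le_zero hdeg] at h0 ⊢
      rw [aeval_C] at h0
      have : p.coeff 0 = 0 := hinjRK (by simpa using h0)
      simp [this]
    | succ n ih =>
      intro p hdeg h0
      set a := p.coeff (n + 1) with ha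
      set q : R[X] := C f * p - C a * X ^ n * d with hq
      have hq2 : q = C f * p - C (a * f) * X ^ (n + 1) + C (a * g) * X ^ n := by
        rw [hq, hd]
        simp only [map_mul]
        ring
      have hdq : q.natDegree ≤ n := by
        rw [Polynomial.natDegree_le_iff_coeff_eq_zero]
        intro N hN
        rw [hq2]
        simp only [coeff_add, coeff_sub, coeff_C_mul, coeff_X_pow]
        rcases eq_or_lt_of_le (Nat.succ_le_of_lt hN) with hNe | hNl
        · rw [← hNe]
          simp [ha, Nat.ne_of_lt hN |>.symm ]
          ring
        · rw [Polynomial.coeff_eq_zero_of_natDegree_lt (lt_of_le_of_lt hdeg hNl)]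
          simp [show N ≠ n + 1 by omega, show N ≠ n by omega]
      have haq : Polynomial.aeval t₀ q = 0 := by
        rw [hq]
        simp [map_sub, map_mul, h0, hd0]
      have hsplit : C f ^ (n + 1) * p = C f ^ n * q + (C f ^ n * (C a * X ^ n)) * d := by
        rw [hq]; ring
      rw [hsplit]
      exact Ideal.add_mem _ (ih q hdq haq)
        (Ideal.mul_mem_left _ _ (Ideal.subset_span (Set.mem_singleton d)))
  -- the element g/f of S
  have ht₀ : t₀ ∈ S := by
    rw [hS]
    exact Algebra.self_mem_adjoin_singleton R _
  set t : S := ⟨t₀, ht₀⟩ with ht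
  set ψ : R[X] →ₐ[R] S := Polynomial.aeval t with hψ
  have hval : ∀ p : R[X], ((ψ p : S) : K) = Polynomial.aeval t₀ p := by
    intro p
    show S.val (ψ p) = _
    rw [hψ]
    exact (Polynomial.aeval_algHom_apply S.val t p).symm
  -- surjectivity of ψ
  have hsurj : Function.Surjective ψ := by
    intro x
    have hx : (x : K) ∈ Algebra.adjoin R {t₀} := by rw [← hS]; exact x.2
    rw [Algebra.adjoin_singleton_eq_range_aeval] at hx
    obtain ⟨p, hp⟩ := hx
    exact ⟨p, Subtype.ext (by rw [hval p]; exact hp)⟩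
  -- kernel of ψ
  have hker : RingHom.ker ψ = Ideal.span {d} := by
    apply le_antisymm
    · intro p hp
      have h0 : Polynomial.aeval t₀ p = 0 := by
        rw [← hval p]
        rw [RingHom.mem_ker] at hp
        rw [hp]
        simp
      have := lemA p.natDegree p le_rfl h0
      rw [Ideal.mem_span_singleton] at this ⊢
      rcases hdprime.dvd_or_dvd this with h | h
      · exact absurd (hdprime.dvd_of_dvd_pow h) hdf
      · exact h
    · refine Ideal.span_le.mpr ?_
      rintro x hx
      rw [Set.mem_singleton_iff] at hx
      subst hx
      rw [SetLike.mem_coe, RingHom.mem_ker]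
      apply Subtype.ext
      rw [hval d, hd0]
      simp
  -- the algebra equivalence
  have equiv : (R[X] ⧸ Ideal.span {d}) ≃ₐ[R] S :=
    (Ideal.quotientEquivAlgOfEq R hker.symm).trans
      (Ideal.quotientKerAlgEquivOfSurjective hsurj)
  refine ⟨⟨equiv⟩, inferInstance, ?_⟩
  intro hfSprime hUF
  haveI hnoeth : IsNoetherianRing S :=
    isNoetherianRing_of_surjective (R[X]) S ψ.toRingHom hsurj
  haveI : WfDvdMonoid S := IsNoetherianRing.wfDvdMonoid
  exact nagata_crit fS hfSprime Sf hUF
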